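/- Let E be a two-dimensional real normed space and K ⊆ E a nonempty compact set that is non-centrable (i.e., diam K < 2·λ_K). Then the Chebyshev set of K is contained in the relative interior of the convex hull of K: Ch(K) ⊆ relint(conv K). -/

import Mathlib

open Metric Set

variable {E : Type*} [NormedAddCommGroup E] [NormedSpace ℝ E] [FiniteDimensional ℝ E]

/-- The Chebyshev radius of a set: the smallest `r` such that `K` is contained
in a closed ball of radius `r`. -/
noncomputable def chebRadius (K : Set E) : ℝ :=
  sInf {r : ℝ | ∃ x : E, K ⊆ Metric.closedBall x r}

/-- The `r`-ball intersection of `K`. -/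
def ballInt (K : Set E) (r : ℝ) : Set E :=
  ⋂ x ∈ K, Metric.closedBall x r

/-- The `r`-ball hull of `K`. -/
def ballHull (K : Set E) (r : ℝ) : Set E :=
  ⋂ x ∈ {x : E | K ⊆ Metric.closedBall x r}, Metric.closedBall x r

/-- The Chebyshev set of `K`: centers of minimal enclosing balls of `K`. -/
noncomputable def chebSet (K : Set E) : Set E :=
  {x : E | K ⊆ Metric.closedBall x (chebRadius K)}

/-- A bounded set is (diametrically) complete if adding any new point
increases its diameter. -/
def IsDiamComplete (C : Set E) : Prop :=
  Bornology.IsBounded C ∧ ∀ x ∉ C, Metric.diam C < Metric.diam (C ∪ {x})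

/-- `Kc` is a completion of `K`: a complete set containing `K` with the same diameter. -/
def IsCompletion (Kc K : Set E) : Prop :=
  IsDiamComplete Kc ∧ K ⊆ Kc ∧ Metric.diam Kc = Metric.diam K

/-- The critical set of `K` with respect to a Chebyshev center `x`. -/
noncomputable def critSet (K : Set E) (x : E) : Set E :=
  K ∩ Metric.sphere x (chebRadius K)

section AuxProof

section ComplexAux

open Complex

private lemma sin_identity (a b t : ℝ) :
    (Real.sin (b - a) : ℂ) * Complex.exp (t * I) =
      (Real.sin (b - t) : ℂ) * Complex.exp (a * I) +
        (Real.sin (t - a) : ℂ) * Complex.exp (b * I) := by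
  rw [Real.sin_sub, Real.sin_sub, Real.sin_sub]
  rw [Complex.exp_mul_I, Complex.exp_mul_I, Complex.exp_mul_I]
  push_cast
  ring

private lemma complex_cone {z1 z2 z : ℂ} (h1 : z1 ≠ 0) (h2 : z2 ≠ 0) (hz : z ≠ 0)
    (ha1 : 0 ≤ z1.arg) (h1z : z1.arg ≤ z.arg) (hz2 : z.arg ≤ z2.arg) (hPi : z2.arg < Real.pi) :
    ∃ c1 c2 : ℝ, 0 ≤ c1 ∧ 0 ≤ c2 ∧ z = (c1 : ℂ) * z1 + (c2 : ℂ) * z2 := by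
  set t1 := z1.arg
  set t2 := z2.arg
  set t := z.arg
  have e1 : (‖z1‖ : ℂ) * Complex.exp (t1 * I) = z1 := Complex.norm_mul_exp_arg_mul_I z1
  have e2 : (‖z2‖ : ℂ) * Complex.exp (t2 * I) = z2 := Complex.norm_mul_exp_arg_mul_I z2
  have e : (‖z‖ : ℂ) * Complex.exp (t * I) = z := Complex.norm_mul_exp_arg_mul_I z
  have hR1 : (0:ℝ) < ‖z1‖ := by simpa using norm_pos_iff.mpr h1
  have hR2 : (0:ℝ) < ‖z2‖ := by simpa using norm_pos_iff.mpr h2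
  have hR : (0:ℝ) < ‖z‖ := by simpa using norm_pos_iff.mpr hz
  rcases eq_or_lt_of_le (le_trans h1z hz2) with heq | hlt
  · -- t1 = t2, so t = t1
    have ht : t = t1 := le_antisymm (heq ▸ hz2) h1z
    refine ⟨‖z‖ / ‖z1‖, 0, by positivity, le_refl _, ?_⟩
    have hne1 : (‖z1‖ : ℂ) ≠ 0 := by exact_mod_cast hR1.ne'
    calc z = (‖z‖ : ℂ) * Complex.exp (t * I) := e.symm
    _ = ((‖z‖ / ‖z1‖ : ℝ) : ℂ) * ((‖z1‖ : ℂ) *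
          Complex.exp (t1 * I)) + ((0:ℝ) : ℂ) * z2 := by
        rw [ht]; push_cast; field_simp; ring
    _ = _ := by rw [e1]
  · -- t1 < t2
    have hd : 0 < Real.sin (t2 - t1) :=
      Real.sin_pos_of_pos_of_lt_pi (by linarith) (by linarith)
    have hs1 : 0 ≤ Real.sin (t2 - t) :=
      Real.sin_nonneg_of_nonneg_of_le_pi (by linarith) (by linarith)
    have hs2 : 0 ≤ Real.sin (t - t1) :=
      Real.sin_nonneg_of_nonneg_of_le_pi (by linarith) (by linarith)
    refine ⟨‖z‖ * Real.sin (t2 - t) / (‖z1‖ * Real.sin (t2 - t1)),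
      ‖z‖ * Real.sin (t - t1) / (‖z2‖ * Real.sin (t2 - t1)),
      by positivity, by positivity, ?_⟩
    have hne1 : (‖z1‖ : ℂ) ≠ 0 := by exact_mod_cast hR1.ne'
    have hne2 : (‖z2‖ : ℂ) ≠ 0 := by exact_mod_cast hR2.ne'
    have hsin := sin_identity t1 t2 t
    have hned : (Complex.sin ((t2 : ℂ) - (t1 : ℂ))) ≠ 0 := by
      have h9 : ((Real.sin (t2 - t1) : ℝ) : ℂ) ≠ 0 := by exact_mod_cast hd.ne'
      rwa [Complex.ofReal_sin, Complex.ofReal_sub] at h9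
    push_cast at hsin
    calc z = (‖z‖ : ℂ) * Complex.exp (t * I) := e.symm
    _ = ((‖z‖ * Real.sin (t2 - t) / (‖z1‖ * Real.sin (t2 - t1)) : ℝ) : ℂ) *
          ((‖z1‖ : ℂ) * Complex.exp (t1 * I)) +
        ((‖z‖ * Real.sin (t - t1) / (‖z2‖ * Real.sin (t2 - t1)) : ℝ) : ℂ) *
          ((‖z2‖ : ℂ) * Complex.exp (t2 * I)) := by
        push_cast
        field_simp
        linear_combination (norm := ring_nf) (‖z‖ : ℂ) * hsin
    _ = _ := by rw [e1, e2]

end ComplexAux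

private lemma real_scale_aux {A B lam : ℝ} (hlam : 0 < lam) (hA : 0 ≤ A)
    (h : ∀ r : ℝ, 0 < r → r < lam → r * A ≤ B) : lam * A ≤ B := by
  rcases eq_or_lt_of_le hA with hA0 | hA0
  · have := h (lam/2) (by linarith) (by linarith)
    nlinarith
  · by_contra hBA
    push_neg at hBA
    have hB : 0 ≤ B := le_trans (by positivity) (h (lam/2) (by linarith) (by linarith))
    have h1 : B / A < lam := (div_lt_iff₀ hA0).2 (by nlinarith)
    have h2 : 0 ≤ B / A := div_nonneg hB hA0.le
    have hr3 : 0 < (B / A + lam) / 2 := by linarith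
    have hr4 : (B / A + lam) / 2 < lam := by linarith
    have hle := h _ hr3 hr4
    have hgt : B < (B / A + lam) / 2 * A := by
      have hdm : B / A * A = B := div_mul_cancel₀ B hA0.ne'
      nlinarith [mul_lt_mul_of_pos_right (show B / A < (B / A + lam) / 2 by linarith) hA0]
    linarith

private lemma lemA {lam : ℝ} (hlam : 0 < lam) {u1 u2 u : E}
    (h1 : ‖u1‖ = lam) (h2 : ‖u2‖ = lam) (hu : ‖u‖ = lam)
    {c1 c2 : ℝ} (hc1 : 0 ≤ c1) (hc2 : 0 ≤ c2) (hrep : u = c1 • u1 + c2 • u2)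
    (g : E →L[ℝ] ℝ) (hg : ‖g‖ ≤ 1) (hgu : g u = lam) :
    2 * lam - ‖u1 - u2‖ ≤ g u1 + g u2 := by
  have hD : 0 ≤ ‖u1 - u2‖ := norm_nonneg _
  have hgle : ∀ z : E, g z ≤ ‖z‖ := by
    intro z
    calc g z ≤ |g z| := le_abs_self _
    _ ≤ ‖g‖ * ‖z‖ := g.le_opNorm z
    _ ≤ 1 * ‖z‖ := mul_le_mul_of_nonneg_right hg (norm_nonneg z)
    _ = ‖z‖ := one_mul _
  have hg1 : g u1 ≤ lam := h1 ▸ hgle u1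
  have hg2 : g u2 ≤ lam := h2 ▸ hgle u2
  rcases eq_or_lt_of_le hc1 with hc10 | hc10
  · -- c1 = 0
    have hc2' : c2 = 1 := by
      have he : ‖u‖ = c2 * lam := by
        rw [hrep, ← hc10, zero_smul, zero_add, norm_smul, Real.norm_eq_abs,
          abs_of_nonneg hc2, h2]
      rw [hu] at he; nlinarith
    have hrep' : u = u2 := by rw [hrep, ← hc10, hc2', zero_smul, zero_add, one_smul]
    have hkey : lam - g u1 ≤ ‖u1 - u2‖ := by
      have h3 := hgle (u - u1)
      rw [map_sub, hgu] at h3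
      have h4 : ‖u - u1‖ = ‖u1 - u2‖ := by rw [hrep', norm_sub_rev]
      linarith [h4 ▸ h3]
    have : g u2 = lam := by rw [← hrep', hgu]
    linarith
  rcases eq_or_lt_of_le hc2 with hc20 | hc20
  · -- c2 = 0
    have hc1' : c1 = 1 := by
      have he : ‖u‖ = c1 * lam := by
        rw [hrep, ← hc20, zero_smul, add_zero, norm_smul, Real.norm_eq_abs,
          abs_of_nonneg hc1, h1]
      rw [hu] at he; nlinarith
    have hrep' : u = u1 := by rw [hrep, ← hc20, hc1', zero_smul, add_zero, one_smul]
    have hkey : lam - g u2 ≤ ‖u1 - u2‖ := by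
      have h3 := hgle (u - u2)
      rw [map_sub, hgu] at h3
      have h4 : ‖u - u2‖ = ‖u1 - u2‖ := by rw [hrep']
      linarith [h4 ▸ h3]
    have : g u1 = lam := by rw [← hrep', hgu]
    linarith
  -- both positive
  have hu1ne : u1 ≠ 0 := by intro h0; rw [h0, norm_zero] at h1; linarith
  have hu2ne : u2 ≠ 0 := by intro h0; rw [h0, norm_zero] at h2; linarith
  obtain ⟨p1, hp1n, hp1u⟩ := exists_dual_vector ℝ u1 (norm_ne_zero_iff.2 hu1ne)
  obtain ⟨p2, hp2n, hp2u⟩ := exists_dual_vector ℝ u2 (norm_ne_zero_iff.2 hu2ne)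
  have hp1le : ∀ z : E, p1 z ≤ ‖z‖ := fun z => by
    calc p1 z ≤ |p1 z| := le_abs_self _
    _ ≤ ‖p1‖ * ‖z‖ := p1.le_opNorm z
    _ = ‖z‖ := by rw [hp1n, one_mul]
  have hp2le : ∀ z : E, p2 z ≤ ‖z‖ := fun z => by
    calc p2 z ≤ |p2 z| := le_abs_self _
    _ ≤ ‖p2‖ * ‖z‖ := p2.le_opNorm z
    _ = ‖z‖ := by rw [hp2n, one_mul]
  have hp1u' : p1 u1 = lam := by rw [h1] at hp1u; exact_mod_cast hp1u
  have hp2u' : p2 u2 = lam := by rw [h2] at hp2u; exact_mod_cast hp2u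
  have hσ : 1 ≤ c1 + c2 := by
    have h3 : ‖u‖ ≤ c1 * lam + c2 * lam := by
      calc ‖u‖ = ‖c1 • u1 + c2 • u2‖ := by rw [hrep]
      _ ≤ ‖c1 • u1‖ + ‖c2 • u2‖ := norm_add_le _ _
      _ = c1 * lam + c2 * lam := by
          rw [norm_smul, norm_smul, Real.norm_eq_abs, Real.norm_eq_abs,
            abs_of_nonneg hc1, abs_of_nonneg hc2, h1, h2]
    rw [hu] at h3; nlinarith
  have hkey1 : (c1 + c2 - 1) * lam ≤ c2 * ‖u1 - u2‖ := by
    have hA : lam - p1 u2 ≤ ‖u1 - u2‖ := by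
      have h3 := hp1le (u1 - u2); rw [map_sub, hp1u'] at h3; linarith
    have hB : c1 * lam + c2 * p1 u2 ≤ lam := by
      have h3 : p1 u ≤ lam := by rw [← hu]; exact hp1le u
      rw [hrep, map_add, map_smul, map_smul, smul_eq_mul, smul_eq_mul, hp1u'] at h3
      linarith
    have h5 := mul_le_mul_of_nonneg_left hA hc2
    rw [mul_sub] at h5
    linarith [h5, hB]
  have hkey2 : (c1 + c2 - 1) * lam ≤ c1 * ‖u1 - u2‖ := by
    have hA : lam - p2 u1 ≤ ‖u1 - u2‖ := by
      have h3 := hp2le (u2 - u1); rw [map_sub, hp2u'] at h3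
      rw [norm_sub_rev] at h3; linarith
    have hB : c1 * p2 u1 + c2 * lam ≤ lam := by
      have h3 : p2 u ≤ lam := by rw [← hu]; exact hp2le u
      rw [hrep, map_add, map_smul, map_smul, smul_eq_mul, smul_eq_mul, hp2u'] at h3
      linarith
    have h5 := mul_le_mul_of_nonneg_left hA hc1
    rw [mul_sub] at h5
    linarith [h5, hB]
  have hsum : c1 * (lam - g u1) + c2 * (lam - g u2) = (c1 + c2 - 1) * lam := by
    have h3 : c1 * g u1 + c2 * g u2 = lam := by
      rw [← hgu, hrep, map_add, map_smul, map_smul, smul_eq_mul, smul_eq_mul]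
    linear_combination -h3
  have habD : lam - g u1 + (lam - g u2) ≤ ‖u1 - u2‖ := by
    rcases le_total c1 c2 with hcc | hcc
    · have h6 : 0 ≤ (c2 - c1) * (lam - g u2) :=
        mul_nonneg (by linarith) (by linarith)
      have h7 : c1 * (lam - g u1 + (lam - g u2)) ≤ c1 * ‖u1 - u2‖ := by linarith [hkey2, hsum, h6]
      exact le_of_mul_le_mul_left h7 hc10
    · have h6 : 0 ≤ (c1 - c2) * (lam - g u1) :=
        mul_nonneg (by linarith) (by linarith)
      have h7 : c2 * (lam - g u1 + (lam - g u2)) ≤ c2 * ‖u1 - u2‖ := by linarith [hkey1, hsum, h6]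
      exact le_of_mul_le_mul_left h7 hc20
  linarith

private lemma descend {lam : ℝ} (hlam : 0 < lam) {u1 u2 u : E}
    (h1 : ‖u1‖ = lam) (h2 : ‖u2‖ = lam) (hu : ‖u‖ = lam)
    (hd : ‖u1 - u2‖ < 2 * lam)
    {c1 c2 : ℝ} (hc1 : 0 ≤ c1) (hc2 : 0 ≤ c2) (hrep : u = c1 • u1 + c2 • u2) :
    ∃ t : ℝ, 0 < t ∧ t ≤ 1 ∧ ‖u - t • (u1 + u2)‖ < lam := by
  by_contra hcon
  push_neg at hcon
  set v := u1 + u2 with hv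
  have hseg : ∀ z ∈ segment ℝ (u - v) u, lam ≤ ‖z‖ := by
    rintro z ⟨a, b, ha, hb, hab, rfl⟩
    have hb' : b = 1 - a := by linarith
    subst hb'
    have hz : a • (u - v) + (1 - a) • u = u - a • v := by module
    rw [hz]
    rcases eq_or_lt_of_le ha with ha0 | ha0
    · rw [← ha0, zero_smul, sub_zero, hu]
    · exact hcon a ha0 (by linarith)
  have hdisj : Disjoint (ball (0 : E) lam) (segment ℝ (u - v) u) := by
    rw [Set.disjoint_left]
    intro z hz hzseg
    rw [mem_ball_zero_iff] at hz
    exact absurd hz (not_lt.2 (hseg z hzseg))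
  obtain ⟨g0, c, hball, hsegle⟩ :=
    geometric_hahn_banach_open (convex_ball (0 : E) lam) isOpen_ball
      (convex_segment (u - v) u) hdisj
  have hc0 : 0 < c := by
    have := hball 0 (mem_ball_self hlam)
    rwa [map_zero] at this
  have hu_seg : c ≤ g0 u := hsegle u (right_mem_segment ℝ (u - v) u)
  have huv_seg : c ≤ g0 (u - v) := hsegle _ (left_mem_segment ℝ (u - v) u)
  have hbound : ∀ z : E, lam * |g0 z| ≤ c * ‖z‖ := by
    intro z
    rcases eq_or_ne z 0 with rfl | hz0
    · simp [map_zero]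
    · apply real_scale_aux hlam (abs_nonneg _)
      intro r hr0 hrlam
      have hzn : (0 : ℝ) < ‖z‖ := norm_pos_iff.2 hz0
      set w := (r / ‖z‖) • z with hw
      have hwn : ‖w‖ = r := by
        rw [hw, norm_smul, Real.norm_eq_abs, abs_of_pos (by positivity), div_mul_cancel₀]
        exact hzn.ne'
      have hw1 : g0 w < c := hball w (by rwa [mem_ball_zero_iff, hwn])
      have hw2 : -g0 w < c := by
        have := hball (-w) (by rwa [mem_ball_zero_iff, norm_neg, hwn])
        rwa [map_neg] at this
      have habs : |g0 w| ≤ c := abs_le.2 ⟨by linarith, hw1.le⟩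
      have hgw : |g0 w| = r / ‖z‖ * |g0 z| := by
        rw [hw, map_smul, smul_eq_mul, abs_mul, abs_of_pos (by positivity)]
      rw [hgw] at habs
      calc r * |g0 z| = (r / ‖z‖ * |g0 z|) * ‖z‖ := by field_simp
      _ ≤ c * ‖z‖ := mul_le_mul_of_nonneg_right habs hzn.le
  have hgu_le : g0 u ≤ c := by
    have := hbound u
    rw [hu] at this
    have h3 : |g0 u| ≤ c := by nlinarith [this]
    linarith [le_abs_self (g0 u)]
  have hgu_eq : g0 u = c := le_antisymm hgu_le hu_seg
  set g : E →L[ℝ] ℝ := (lam / c) • g0 with hg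
  have hgu : g u = lam := by
    rw [hg, ContinuousLinearMap.smul_apply, smul_eq_mul, hgu_eq, div_mul_cancel₀]
    exact hc0.ne'
  have hgnorm : ‖g‖ ≤ 1 := by
    apply ContinuousLinearMap.opNorm_le_bound _ zero_le_one
    intro z
    rw [hg, ContinuousLinearMap.smul_apply, smul_eq_mul, Real.norm_eq_abs, abs_mul,
      abs_of_pos (show (0:ℝ) < lam / c by positivity), one_mul]
    have hb := hbound z
    rw [div_mul_eq_mul_div, div_le_iff₀ hc0]
    calc lam * |g0 z| ≤ c * ‖z‖ := hb
    _ = ‖z‖ * c := mul_comm _ _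
  have hgv : g v ≤ 0 := by
    have h3 : g0 v ≤ 0 := by
      rw [map_sub] at huv_seg
      linarith [hgu_eq]
    rw [hg, ContinuousLinearMap.smul_apply, smul_eq_mul]
    have : (0:ℝ) < lam / c := by positivity
    nlinarith
  have hfin := lemA hlam h1 h2 hu hc1 hc2 hrep g hgnorm hgu
  rw [← map_add] at hfin
  rw [← hv] at hfin
  linarith

private lemma exists_descent (hdim : Module.finrank ℝ E = 2) {lam : ℝ} (hlam : 0 < lam)
    {C : Set E} (hCc : IsCompact C) (hCne : C.Nonempty)
    (hCs : ∀ u ∈ C, ‖u‖ = lam)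
    (hCd : ∀ u ∈ C, ∀ u' ∈ C, ‖u - u'‖ < 2 * lam)
    (f : E →L[ℝ] ℝ) (hf : f ≠ 0) (hfC : ∀ u ∈ C, f u ≤ 0) :
    ∃ v : E, ∀ u ∈ C, ∃ t : ℝ, 0 < t ∧ t ≤ 1 ∧ ‖u - t • v‖ < lam := by
  have hker1 : Module.finrank ℝ (LinearMap.ker (f : E →ₗ[ℝ] ℝ)) = 1 := by
    have hrn := LinearMap.finrank_range_add_finrank_ker (f : E →ₗ[ℝ] ℝ)
    rw [hdim] at hrn
    have hle : Module.finrank ℝ (LinearMap.range (f : E →ₗ[ℝ] ℝ)) ≤ 1 := by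
      simpa using Submodule.finrank_le (LinearMap.range (f : E →ₗ[ℝ] ℝ))
    have hne : Module.finrank ℝ (LinearMap.range (f : E →ₗ[ℝ] ℝ)) ≠ 0 := by
      intro h0
      have hbot : LinearMap.range (f : E →ₗ[ℝ] ℝ) = ⊥ := Submodule.finrank_eq_zero.1 h0
      rw [LinearMap.range_eq_bot] at hbot
      apply hf
      ext z
      have := congrFun (congrArg DFunLike.coe hbot) z
      simpa using this
    have h1' : Module.finrank ℝ (LinearMap.range (f : E →ₗ[ℝ] ℝ)) = 1 :=
      le_antisymm hle (Nat.one_le_iff_ne_zero.2 hne)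
    have hkk : LinearMap.ker (f : E →ₗ[ℝ] ℝ) = LinearMap.ker (f : E →ₗ[ℝ] ℝ) := rfl
    rw [hkk] at hrn
    omega
  have hkerspan : ∀ w : E, w ≠ 0 → f w = 0 → ∀ z : E, f z = 0 → ∃ t : ℝ, z = t • w := by
    intro w hw hfw z hfz
    have hsple : (ℝ ∙ w) ≤ LinearMap.ker (f : E →ₗ[ℝ] ℝ) := by
      rw [Submodule.span_singleton_le_iff_mem]
      simpa using hfw
    have hspfr : Module.finrank ℝ (LinearMap.ker (f : E →ₗ[ℝ] ℝ)) ≤ Module.finrank ℝ (ℝ ∙ w) := by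
      rw [finrank_span_singleton hw, hker1]
    have heq := Submodule.eq_of_le_of_finrank_le hsple hspfr
    have hzmem : z ∈ (ℝ ∙ w) := by
      rw [heq]
      simpa using hfz
    obtain ⟨t, ht⟩ := Submodule.mem_span_singleton.1 hzmem
    exact ⟨t, ht.symm⟩
  obtain ⟨w1, hw1mem, hw1ne⟩ := Submodule.exists_mem_ne_zero_of_ne_bot
    (p := LinearMap.ker (f : E →ₗ[ℝ] ℝ)) (by intro h0; rw [h0, finrank_bot] at hker1; exact one_ne_zero hker1.symm)
  have hw1ker : f w1 = 0 := hw1mem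
  -- normalize
  set w : E := (lam / ‖w1‖) • w1 with hwdef
  have hw1n : (0:ℝ) < ‖w1‖ := norm_pos_iff.2 hw1ne
  have hwnorm : ‖w‖ = lam := by
    rw [hwdef, norm_smul, Real.norm_eq_abs, abs_of_pos (by positivity), div_mul_cancel₀ _ hw1n.ne']
  have hwker : f w = 0 := by rw [hwdef, map_smul, smul_eq_mul, hw1ker, mul_zero]
  have hwne : w ≠ 0 := by intro h0; rw [h0, norm_zero] at hwnorm; linarith
  -- not both w and -w in C
  have hnotboth : ¬ (w ∈ C ∧ -w ∈ C) := by
    rintro ⟨hw1, hw2⟩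
    have := hCd w hw1 (-w) hw2
    rw [sub_neg_eq_add, ← two_smul ℝ w, norm_smul, Real.norm_eq_abs] at this
    rw [hwnorm] at this
    norm_num at this
  -- main construction, given the good sign choice of w
  have key : ∀ wg : E, f wg = 0 → ‖wg‖ = lam → -wg ∉ C →
      ∃ v : E, ∀ u ∈ C, ∃ t : ℝ, 0 < t ∧ t ≤ 1 ∧ ‖u - t • v‖ < lam := by
    clear hnotboth hwker hwnorm hwne hwdef hw1ker hw1mem hw1ne hw1n
    intro w hwker hwnorm hwC
    have hwne : w ≠ 0 := by intro h0; rw [h0, norm_zero] at hwnorm; linarith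
    obtain ⟨p, hpn, hpw⟩ := exists_dual_vector ℝ w (norm_ne_zero_iff.2 hwne)
    have hpw' : p w = lam := by rw [hwnorm] at hpw; exact_mod_cast hpw
    -- complex coordinates
    set m : E → ℂ := fun z => (p z : ℂ) + (-(f z) : ℝ) * Complex.I with hm
    have hmre : ∀ z, (m z).re = p z := by intro z; simp [hm]
    have hmim : ∀ z, (m z).im = -(f z) := by intro z; simp [hm]
    have hminj : ∀ z : E, m z = 0 → z = 0 := by
      intro z hz
      have hre : p z = 0 := by rw [← hmre z, hz]; simp
      have him : f z = 0 := by
        have := hmim z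
        rw [hz] at this
        simp at this
        linarith [this]
      obtain ⟨t, ht⟩ := hkerspan w hwne hwker z him
      rw [ht, map_smul, smul_eq_mul, hpw'] at hre
      have : t = 0 := by
        rcases mul_eq_zero.1 hre with h | h
        · exact h
        · exact absurd h hlam.ne'
      rw [ht, this, zero_smul]
    -- members of C are nonzero
    have hCne0 : ∀ u ∈ C, u ≠ 0 := by
      intro u hu h0
      have := hCs u hu
      rw [h0, norm_zero] at this
      linarith
    have hmne : ∀ u ∈ C, m u ≠ 0 := by
      intro u hu h0
      exact hCne0 u hu (hminj u h0)
    -- kernel elements of norm lam in C : only candidate is w itself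
    have hCker : ∀ u ∈ C, f u = 0 → u = w := by
      intro u hu hfu
      obtain ⟨t, ht⟩ := hkerspan w hwne hwker u hfu
      have hn := hCs u hu
      rw [ht, norm_smul, Real.norm_eq_abs, hwnorm] at hn
      have habs : |t| = 1 := by
        have := mul_right_cancel₀ hlam.ne' (by rw [hn, one_mul] : |t| * lam = 1 * lam)
        exact this
      rcases abs_eq (by norm_num : (0:ℝ) ≤ 1) |>.1 habs with h | h
      · rw [ht, h, one_smul]
      · exfalso
        apply hwC
        rw [← neg_one_smul ℝ w, ← h, ← ht]
        exact hu
    -- arg bounds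
    have hargnn : ∀ u ∈ C, 0 ≤ (m u).arg := by
      intro u hu
      rw [Complex.arg_nonneg_iff, hmim]
      linarith [hfC u hu]
    have harglt : ∀ u ∈ C, (m u).arg < Real.pi := by
      intro u hu
      rcases eq_or_lt_of_le (Complex.arg_le_pi (m u)) with heq | hlt
      · exfalso
        rw [Complex.arg_eq_pi_iff, hmre, hmim] at heq
        have hfu : f u = 0 := by linarith [heq.2]
        have := hCker u hu hfu
        rw [this, hpw'] at heq
        linarith [heq.1]
      · exact hlt
    have hslit : ∀ u ∈ C, m u ∈ Complex.slitPlane := by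
      intro u hu
      rw [Complex.mem_slitPlane_iff]
      rw [hmre, hmim]
      rcases eq_or_lt_of_le (hfC u hu) with heq | hlt
      · left
        have := hCker u hu heq
        rw [this, hpw']
        exact hlam
      · right
        intro h0
        rw [← h0] at hlt
        linarith
    -- continuity of arg ∘ m on C
    have hmcont : Continuous m := by
      rw [hm]
      fun_prop
    have hcont : ContinuousOn (fun u => (m u).arg) C := by
      intro u hu
      exact ((Complex.continuousAt_arg (hslit u hu)).comp (hmcont.continuousAt)).continuousWithinAt
    obtain ⟨u1, hu1C, hu1min⟩ := hCc.exists_isMinOn hCne hcont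
    obtain ⟨u2, hu2C, hu2max⟩ := hCc.exists_isMaxOn hCne hcont
    refine ⟨u1 + u2, ?_⟩
    intro u hu
    obtain ⟨c1, c2, hc1, hc2, hczz⟩ := complex_cone (hmne u1 hu1C) (hmne u2 hu2C)
      (hmne u hu) (hargnn u1 hu1C) (hu1min hu) (hu2max hu) (harglt u2 hu2C)
    -- transfer cone representation to E
    have hre' : p u = c1 * p u1 + c2 * p u2 := by
      have h := congrArg Complex.re hczz
      simp only [Complex.add_re, Complex.mul_re, Complex.ofReal_re, Complex.ofReal_im,
        zero_mul, sub_zero, hmre] at h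
      exact h
    have him' : -(f u) = c1 * -(f u1) + c2 * -(f u2) := by
      have h := congrArg Complex.im hczz
      simp only [Complex.add_im, Complex.mul_im, Complex.ofReal_re, Complex.ofReal_im,
        zero_mul, add_zero, hmim] at h
      exact h
    have hrep : u = c1 • u1 + c2 • u2 := by
      have hre0 : p (u - (c1 • u1 + c2 • u2)) = 0 := by
        rw [map_sub, map_add, map_smul, map_smul, smul_eq_mul, smul_eq_mul]
        linarith
      have him0 : f (u - (c1 • u1 + c2 • u2)) = 0 := by
        rw [map_sub, map_add, map_smul, map_smul, smul_eq_mul, smul_eq_mul]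
        linarith
      have hz : m (u - (c1 • u1 + c2 • u2)) = 0 := by
        have hdef : m (u - (c1 • u1 + c2 • u2)) =
            ((p (u - (c1 • u1 + c2 • u2)) : ℝ) : ℂ) +
              ((-(f (u - (c1 • u1 + c2 • u2))) : ℝ) : ℂ) * Complex.I := rfl
        rw [hdef, hre0, him0]
        simp
      have h9 := hminj _ hz
      rw [sub_eq_zero] at h9
      exact h9
    exact descend hlam (hCs u1 hu1C) (hCs u2 hu2C) (hCs u hu)
      (hCd u1 hu1C u2 hu2C) hc1 hc2 hrep
  rcases Classical.em (-w ∈ C) with hwC | hwC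
  · apply key (-w)
    · rw [map_neg, hwker, neg_zero]
    · rw [norm_neg]; exact hwnorm
    · rw [neg_neg]
      intro hwC2
      exact hnotboth ⟨hwC2, hwC⟩
  · exact key w hwker hwnorm hwC

end AuxProof

theorem chebSet_subset_relint_convexHull_of_noncentrable
    (hdim : Module.finrank ℝ E = 2)
    (K : Set E) (hK : K.Nonempty) (hc : IsCompact K)
    (hnc : Metric.diam K < 2 * chebRadius K) :
    chebSet K ⊆ intrinsicInterior ℝ (convexHull ℝ K) := by
  intro x hx
  set lam := chebRadius K with hlamdef
  have hxK : K ⊆ closedBall x lam := hx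
  have hlam : 0 < lam := by
    have := Metric.diam_nonneg (s := K); linarith
  obtain ⟨k0, hk0⟩ := hK
  have hbdd : BddBelow {r : ℝ | ∃ y : E, K ⊆ Metric.closedBall y r} := by
    refine ⟨0, ?_⟩
    rintro r ⟨y, hy⟩
    have h1 := hy hk0
    rw [mem_closedBall] at h1
    linarith [dist_nonneg (x := k0) (y := y)]
  have hle : ∀ r : ℝ, (∃ y : E, K ⊆ Metric.closedBall y r) → lam ≤ r :=
    fun r hr => csInf_le hbdd hr
  -- Step 1: the affine span of K is everything
  have hspan : affineSpan ℝ K = ⊤ := by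
    by_contra hsp
    rcases eq_or_lt_of_le (Metric.diam_nonneg (s := K)) with hd0 | hd0
    · have hsub : K ⊆ closedBall k0 0 := by
        intro k hk
        rw [mem_closedBall]
        have hdle := Metric.dist_le_diam_of_mem hc.isBounded hk hk0
        linarith [hd0.symm ▸ hdle]
      have := hle 0 ⟨k0, hsub⟩
      linarith
    · -- diametral pair
      obtain ⟨q, hq, hqmax⟩ := (hc.prod hc).exists_isMaxOn ⟨(k0, k0), ⟨hk0, hk0⟩⟩
        (continuous_dist.continuousOn (s := K ×ˢ K))
      obtain ⟨a, b⟩ := q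
      rw [Set.mem_prod] at hq
      obtain ⟨ha, hb⟩ := hq
      have hab : dist a b = Metric.diam K := by
        apply le_antisymm (Metric.dist_le_diam_of_mem hc.isBounded ha hb)
        apply Metric.diam_le_of_forall_dist_le dist_nonneg
        intro p hp p' hp'
        exact hqmax (Set.mk_mem_prod hp hp')
      have hne : a ≠ b := by
        intro h0
        rw [h0, dist_self] at hab
        linarith
      set V := (affineSpan ℝ K).direction with hV
      have hVne : V ≠ ⊤ := fun hVt => hsp
        ((AffineSubspace.direction_eq_top_iff_of_nonempty
          ((affineSpan_nonempty ℝ).2 ⟨k0, hk0⟩)).1 hVt)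
      have hbma : b - a ∈ V := by
        have h1 := AffineSubspace.vsub_mem_direction
          (subset_affineSpan ℝ K hb) (subset_affineSpan ℝ K ha)
        simpa using h1
      have hbmane : b - a ≠ 0 := sub_ne_zero.2 (Ne.symm hne)
      have hVval : V = ℝ ∙ (b - a) := by
        have hle1 : (ℝ ∙ (b - a)) ≤ V := by
          rw [Submodule.span_singleton_le_iff_mem]; exact hbma
        have hfr : Module.finrank ℝ V ≤ Module.finrank ℝ (ℝ ∙ (b - a)) := by
          rw [finrank_span_singleton hbmane]
          have := Submodule.finrank_lt (K := ℝ) (V := E) hVne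
          omega
        exact (Submodule.eq_of_le_of_finrank_le hle1 hfr).symm
      -- all points of K lie on the segment [a,b]; midpoint covers with radius diam/2
      set mid := a + (1/2 : ℝ) • (b - a) with hmid
      have hsub : K ⊆ closedBall mid (Metric.diam K / 2) := by
        intro k hk
        have hkV : k - a ∈ V := by
          have h1 := AffineSubspace.vsub_mem_direction
            (subset_affineSpan ℝ K hk) (subset_affineSpan ℝ K ha)
          simpa using h1
        rw [hVval, Submodule.mem_span_singleton] at hkV
        obtain ⟨t, ht⟩ := hkV
        have hnab : ‖b - a‖ = Metric.diam K := by
          rw [← hab, dist_eq_norm, norm_sub_rev]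
        have hka : ‖k - a‖ ≤ Metric.diam K := by
          rw [← dist_eq_norm]
          exact Metric.dist_le_diam_of_mem hc.isBounded hk ha
        have hkb : ‖k - b‖ ≤ Metric.diam K := by
          rw [← dist_eq_norm]
          exact Metric.dist_le_diam_of_mem hc.isBounded hk hb
        have ht1 : |t| ≤ 1 := by
          rw [← ht, norm_smul, Real.norm_eq_abs, hnab] at hka
          nlinarith [abs_nonneg t]
        have hkb' : k - b = (t - 1) • (b - a) := by
          rw [sub_smul, one_smul, ht]; abel
        have ht2 : |t - 1| ≤ 1 := by
          rw [hkb', norm_smul, Real.norm_eq_abs, hnab] at hkb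
          nlinarith [abs_nonneg (t - 1)]
        have htIcc : 0 ≤ t ∧ t ≤ 1 := by
          rw [abs_le] at ht1 ht2
          constructor <;> linarith [ht1.1, ht1.2, ht2.1, ht2.2]
        have hkmid : k - mid = (t - 1/2) • (b - a) := by
          rw [hmid, sub_smul, ht]; abel
        rw [mem_closedBall, dist_eq_norm, hkmid, norm_smul, Real.norm_eq_abs, hnab]
        have habs : |t - 1/2| ≤ 1/2 := by
          rw [abs_le]; constructor <;> linarith [htIcc.1, htIcc.2]
        nlinarith [Metric.diam_nonneg (s := K)]
      have := hle (Metric.diam K / 2) ⟨mid, hsub⟩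
      linarith
  -- Step 2: reduce to the interior
  suffices hxin : x ∈ interior (convexHull ℝ K) by
    exact interior_subset_intrinsicInterior hxin
  by_contra hxint
  have hconv : Convex ℝ (convexHull ℝ K) := convex_convexHull ℝ K
  have hint_ne : (interior (convexHull ℝ K)).Nonempty := by
    rw [hconv.interior_nonempty_iff_affineSpan_eq_top, affineSpan_convexHull]
    exact hspan
  obtain ⟨f, hfsep⟩ := geometric_hahn_banach_open_point hconv.interior isOpen_interior hxint
  obtain ⟨a0, ha0⟩ := hint_ne
  have hfne : f ≠ 0 := by
    intro h0
    have := hfsep a0 ha0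
    rw [h0] at this
    simp at this
  have hfK : ∀ k ∈ K, f k ≤ f x := by
    intro k hk
    have hkc : k ∈ convexHull ℝ K := subset_convexHull ℝ K hk
    by_contra hgt
    push_neg at hgt
    have ha0x : f a0 < f x := hfsep a0 ha0
    set t0 := (f k - f x) / (f k - f a0) with ht0def
    have hden : 0 < f k - f a0 := by linarith
    have ht00 : 0 < t0 := div_pos (by linarith) hden
    have ht01 : t0 ≤ 1 := by
      rw [ht0def, div_le_one hden]; linarith
    have hmem := hconv.add_smul_sub_mem_interior hkc ha0 ⟨ht00, ht01⟩
    have := hfsep _ hmem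
    rw [map_add, map_smul, map_sub, smul_eq_mul] at this
    have hcan : t0 * (f k - f a0) = f k - f x := div_mul_cancel₀ _ hden.ne'
    nlinarith [this, hcan]
  -- Step 3: the critical set
  set C := (fun k => k - x) '' (K ∩ sphere x lam) with hC
  have hCc : IsCompact C :=
    ((hc.inter_right isClosed_sphere).image (continuous_id.sub continuous_const))
  have hCne : C.Nonempty := by
    apply Set.Nonempty.image
    by_contra hemp
    rw [Set.not_nonempty_iff_eq_empty] at hemp
    obtain ⟨km, hkm, hkmax⟩ := hc.exists_isMaxOn ⟨k0, hk0⟩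
      ((continuous_id.dist continuous_const).continuousOn (s := K))
    have hkmlt : dist km x < lam := by
      rcases eq_or_lt_of_le (mem_closedBall.1 (hxK hkm)) with he | hl
      · exfalso
        have : km ∈ K ∩ sphere x lam := ⟨hkm, by rwa [mem_sphere]⟩
        rw [hemp] at this
        exact this
      · exact hl
    have hsub : K ⊆ closedBall x (dist km x) :=
      fun k hk => mem_closedBall.2 (hkmax hk)
    have := hle (dist km x) ⟨x, hsub⟩
    linarith
  have hCs : ∀ u ∈ C, ‖u‖ = lam := by
    rintro u ⟨k, ⟨hkK, hks⟩, rfl⟩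
    rw [mem_sphere] at hks
    rw [← dist_eq_norm]
    exact hks
  have hCd : ∀ u ∈ C, ∀ u' ∈ C, ‖u - u'‖ < 2 * lam := by
    rintro u ⟨k, ⟨hkK, _⟩, rfl⟩ u' ⟨k', ⟨hk'K, _⟩, rfl⟩
    have h1 : k - x - (k' - x) = k - k' := by abel
    rw [h1, ← dist_eq_norm]
    calc dist k k' ≤ Metric.diam K := Metric.dist_le_diam_of_mem hc.isBounded hkK hk'K
    _ < 2 * lam := hnc
  have hfC : ∀ u ∈ C, f u ≤ 0 := by
    rintro u ⟨k, ⟨hkK, _⟩, rfl⟩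
    rw [map_sub]
    linarith [hfK k hkK]
  obtain ⟨v, hv⟩ := exists_descent hdim hlam hCc hCne hCs hCd f hfne hfC
  -- Step 4: uniformize over the critical set by compactness
  choose t ht0 ht1 htlt using fun i : {u : E // u ∈ C} => hv i.1 i.2
  set g : {u : E // u ∈ C} → Set E := fun i => ball ((t i) • v) lam with hg
  have hCcover : C ⊆ ⋃ i, g i := by
    intro u hu
    exact mem_iUnion.2 ⟨⟨u, hu⟩, by
      rw [hg, mem_ball, dist_eq_norm]
      exact htlt ⟨u, hu⟩⟩
  obtain ⟨sf, hsf⟩ := hCc.elim_finite_subcover g (fun i => isOpen_ball) hCcover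
  obtain ⟨u0, hu0⟩ := hCne
  obtain ⟨i0, hi0s, hi0⟩ := mem_iUnion₂.1 (hsf hu0)
  have hsne : sf.Nonempty := ⟨i0, hi0s⟩
  set tmin := sf.inf' hsne t with htmin
  have htmin0 : 0 < tmin := (Finset.lt_inf'_iff hsne).2 (fun i _ => ht0 i)
  -- the part of K away from the critical set
  set K2 := K ∩ ((fun k => k - x) ⁻¹' (⋃ i ∈ sf, g i)ᶜ) with hK2def
  have hK2c : IsCompact K2 := hc.inter_right
    ((isOpen_biUnion (fun i _ => isOpen_ball)).isClosed_compl.preimage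
      (continuous_id.sub continuous_const))
  have hrho : ∃ ρ : ℝ, ρ < lam ∧ ∀ k ∈ K2, dist k x ≤ ρ := by
    rcases Set.eq_empty_or_nonempty K2 with hemp | hne2
    · exact ⟨0, hlam, by rw [hemp]; rintro k ⟨⟩⟩
    · obtain ⟨k2, hk2, hk2max⟩ := hK2c.exists_isMaxOn hne2
        ((continuous_id.dist continuous_const).continuousOn (s := K2))
    
      refine ⟨dist k2 x, ?_, fun k hk => hk2max hk⟩
      rcases eq_or_lt_of_le (mem_closedBall.1 (hxK hk2.1)) with he | hl
      · exfalso
        have hmemC : k2 - x ∈ C := ⟨k2, ⟨hk2.1, by rwa [mem_sphere]⟩, rfl⟩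
        exact hk2.2 (hsf hmemC)
      · exact hl
  obtain ⟨ρ, hρlam, hρbound⟩ := hrho
  set tt := min tmin ((lam - ρ) / (‖v‖ + 1)) with htt
  have htt0 : 0 < tt := lt_min htmin0 (div_pos (by linarith) (by positivity))
  have hall : ∀ k ∈ K, dist k (x + tt • v) < lam := by
    intro k hk
    have hdiff : k - (x + tt • v) = (k - x) - tt • v := by abel
    rw [dist_eq_norm, hdiff]
    have hzn : ‖k - x‖ ≤ lam := by
      have := hxK hk
      rwa [mem_closedBall, dist_eq_norm] at this
    by_cases hzu : k - x ∈ ⋃ i ∈ sf, g i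
    · obtain ⟨i, his, hzi⟩ := mem_iUnion₂.1 hzu
      rw [hg, mem_ball, dist_eq_norm] at hzi
      have hti0 : 0 < t i := ht0 i
      have httle : tt ≤ t i := le_trans (min_le_left _ _) (Finset.inf'_le t his)
      set sc := tt / t i with hsc
      have hsc0 : 0 < sc := div_pos htt0 hti0
      have hsc1 : sc ≤ 1 := (div_le_one hti0).2 httle
      have hid : (k - x) - tt • v = (1 - sc) • (k - x) + sc • ((k - x) - t i • v) := by
        have hmul : sc * t i = tt := div_mul_cancel₀ _ hti0.ne'
        rw [← hmul]
        module
      rw [hid]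
      calc ‖(1 - sc) • (k - x) + sc • ((k - x) - t i • v)‖
          ≤ ‖(1 - sc) • (k - x)‖ + ‖sc • ((k - x) - t i • v)‖ := norm_add_le _ _
      _ = (1 - sc) * ‖k - x‖ + sc * ‖(k - x) - t i • v‖ := by
          rw [norm_smul, norm_smul, Real.norm_eq_abs, Real.norm_eq_abs,
            abs_of_nonneg (by linarith), abs_of_pos hsc0]
      _ < (1 - sc) * lam + sc * lam := by
          have h1 : (1 - sc) * ‖k - x‖ ≤ (1 - sc) * lam :=
            mul_le_mul_of_nonneg_left hzn (by linarith)
          have h2 : sc * ‖(k - x) - t i • v‖ < sc * lam :=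
            (mul_lt_mul_iff_right₀ hsc0).2 hzi
          linarith
      _ = lam := by ring
    · have hk2 : k ∈ K2 := ⟨hk, hzu⟩
      have hz2 : ‖k - x‖ ≤ ρ := by
        have := hρbound k hk2
        rwa [dist_eq_norm] at this
      have httle2 : tt ≤ (lam - ρ) / (‖v‖ + 1) := min_le_right _ _
      have h1 : tt * ‖v‖ ≤ (lam - ρ) / (‖v‖ + 1) * ‖v‖ :=
        mul_le_mul_of_nonneg_right httle2 (norm_nonneg v)
      have h2 : (lam - ρ) / (‖v‖ + 1) * ‖v‖ < lam - ρ := by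
        rw [div_mul_eq_mul_div, div_lt_iff₀ (by positivity)]
        nlinarith [norm_nonneg v]
      calc ‖(k - x) - tt • v‖ ≤ ‖k - x‖ + ‖tt • v‖ := norm_sub_le _ _
      _ = ‖k - x‖ + tt * ‖v‖ := by
          rw [norm_smul, Real.norm_eq_abs, abs_of_pos htt0]
      _ < lam := by linarith
  -- final contradiction
  obtain ⟨kM, hkM, hkMmax⟩ := hc.exists_isMaxOn ⟨k0, hk0⟩
    ((continuous_id.dist continuous_const).continuousOn (s := K))
  have hrlt : dist kM (x + tt • v) < lam := hall kM hkM
  have hsub : K ⊆ closedBall (x + tt • v) (dist kM (x + tt • v)) := by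
    intro k hk
    rw [mem_closedBall]
    exact hkMmax hk
  have := hle _ ⟨x + tt • v, hsub⟩
  linarith
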